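/- For k odd, with b(k) = 2^{k-1}/(k·C(k-1,(k-1)/2)) and f_χ as the majority magnetization map f_χ(m) = tanh(β)·Σ_{S∈{-1,1}^k}(∏_j (1+S_j m)/2)·sgn(Σ_j S_j): if tanh(β) > b(k), then there exists m* ∈ (0,1] with f_χ(m*) = m* and m* ≠ 0. -/

import Mathlib

/-- `pm b` maps a Boolean to the spin value ±1. -/
noncomputable def pm (b : Bool) : ℝ := if b then 1 else -1

section Aux
open Finset

def boolEquiv (k : ℕ) : (Fin k → Bool) ≃ Finset (Fin k) where
  toFun S := Finset.univ.filter (fun j => S j = true)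
  invFun A := fun j => decide (j ∈ A)
  left_inv S := by funext j; simp
  right_inv A := by ext j; simp

lemma sum_pm (k : ℕ) (S : Fin k → Bool) :
    ∑ j, pm (S j) = 2 * (#(Finset.univ.filter (fun j => S j = true)) : ℝ) - k := by
  have : ∀ b : Bool, pm b = 2 * (if b = true then (1:ℝ) else 0) - 1 := by
    intro b; cases b <;> simp [pm] <;> norm_num
  simp only [this]
  rw [Finset.sum_sub_distrib, ← Finset.mul_sum, Finset.sum_boole]
  simp [Finset.card_univ]

lemma sum_group (k : ℕ) (F : ℝ → ℝ) :
    ∑ S : Fin k → Bool, F (∑ j, pm (S j)) =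
    ∑ c ∈ Finset.range (k+1), (k.choose c : ℝ) * F (2*(c:ℝ) - k) := by
  rw [Fintype.sum_equiv (boolEquiv k) _ (fun A => F (2*(#A:ℝ) - k))
    (fun S => by rw [sum_pm]; rfl)]
  rw [show (Finset.univ : Finset (Finset (Fin k))) = (Finset.univ : Finset (Fin k)).powerset
    from Finset.powerset_univ.symm]
  rw [Finset.sum_powerset_apply_card (fun m => F (2*(m:ℝ) - k))]
  simp [Finset.card_univ, nsmul_eq_mul]

lemma tele (n m : ℕ) :
    ((2*n+1).choose (m+1) : ℝ) * (2*((m:ℝ)+1) - (2*(n:ℝ)+1)) =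
    (2*(n:ℝ)+1) * (((2*n).choose m : ℝ) - ((2*n).choose (m+1) : ℝ)) := by
  have h1 : (2*n+1) * (2*n).choose m = (2*n+1).choose (m+1) * (m+1) :=
    Nat.add_one_mul_choose_eq (2*n) m
  have h2 : (2*n+1).choose (m+1) = (2*n).choose m + (2*n).choose (m+1) :=
    Nat.choose_succ_succ (2*n) m
  have h1' : (2*(n:ℝ)+1) * ((2*n).choose m : ℝ) = ((2*n+1).choose (m+1) : ℝ) * ((m:ℝ)+1) := by
    exact_mod_cast congrArg (Nat.cast : ℕ → ℝ) h1
  have h2' : ((2*n+1).choose (m+1) : ℝ) = ((2*n).choose m : ℝ) + ((2*n).choose (m+1) : ℝ) := by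
    exact_mod_cast congrArg (Nat.cast : ℕ → ℝ) h2
  nlinarith [h1', h2']

lemma key (n : ℕ) :
    ∑ c ∈ Finset.range (2*n+2), ((2*n+1).choose c : ℝ) * |2*(c:ℝ) - (2*n+1)| =
    2 * (2*(n:ℝ)+1) * ((2*n).choose n : ℝ) := by
  have hsplit : Finset.range (2*n+2) = Finset.range ((n+1)+(n+1)) := by ring_nf
  have hB : ∑ i ∈ Finset.range (n+1), ((2*n+1).choose (n+1+i) : ℝ) * (2*((n:ℝ)+1+i) - (2*n+1))
      = (2*(n:ℝ)+1) * ((2*n).choose n : ℝ) := by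
    have : ∀ i ∈ Finset.range (n+1),
        ((2*n+1).choose (n+1+i) : ℝ) * (2*((n:ℝ)+1+i) - (2*n+1)) =
        (fun j => (2*(n:ℝ)+1) * ((2*n).choose (n+j) : ℝ)) i -
        (fun j => (2*(n:ℝ)+1) * ((2*n).choose (n+j) : ℝ)) (i+1) := by
      intro i _
      have := tele n (n+i)
      push_cast at this ⊢
      have e1 : n+1+i = (n+i)+1 := by ring
      rw [e1]
      rw [show (2:ℝ)*((n:ℝ)+1+(i:ℝ)) - (2*(n:ℝ)+1) = 2*(((n:ℝ)+(i:ℝ))+1) - (2*(n:ℝ)+1) by ring]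
      rw [this]
      have e2 : n+(i+1) = (n+i)+1 := by ring
      rw [e2]; ring
    rw [Finset.sum_congr rfl this, Finset.sum_range_sub']
    have hz : (2*n).choose (n+(n+1)) = 0 := by
      rw [show n+(n+1) = 2*n+1 by ring]; exact Nat.choose_succ_self _
    rw [hz]; simp
  have habs_up : ∀ i ∈ Finset.range (n+1),
      ((2*n+1).choose (n+1+i) : ℝ) * |2*((n+1+i : ℕ):ℝ) - (2*n+1)| =
      ((2*n+1).choose (n+1+i) : ℝ) * (2*((n:ℝ)+1+i) - (2*n+1)) := by
    intro i _
    have h0 : (0:ℝ) ≤ (i:ℝ) := Nat.cast_nonneg i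
    have hp : (0:ℝ) < 2*((n:ℝ)+1+i) - (2*n+1) := by nlinarith
    push_cast
    rw [abs_of_pos (by push_cast at hp; linarith)]
  have habs_lo : ∀ c ∈ Finset.range (n+1),
      ((2*n+1).choose c : ℝ) * |2*(c:ℝ) - (2*n+1)| =
      ((2*n+1).choose c : ℝ) * ((2*(n:ℝ)+1) - 2*c) := by
    intro c hc
    have hc' : c ≤ n := Nat.lt_succ_iff.mp (Finset.mem_range.mp hc)
    have hcn : (c:ℝ) ≤ (n:ℝ) := Nat.cast_le.mpr hc'
    have : 2*(c:ℝ) - (2*n+1) < 0 := by push_cast; linarith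
    rw [abs_of_neg this]; ring
  have hAB : ∑ c ∈ Finset.range (n+1), ((2*n+1).choose c : ℝ) * ((2*(n:ℝ)+1) - 2*c) =
      ∑ i ∈ Finset.range (n+1), ((2*n+1).choose (n+1+i) : ℝ) * (2*((n:ℝ)+1+i) - (2*n+1)) := by
    rw [← Finset.sum_range_reflect (fun c => ((2*n+1).choose c : ℝ) * ((2*(n:ℝ)+1) - 2*c)) (n+1)]
    refine Finset.sum_congr rfl (fun i hi => ?_)
    have hi' : i ≤ n := Nat.lt_succ_iff.mp (Finset.mem_range.mp hi)
    have e0 : n + 1 - 1 - i = n - i := by omega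
    have e1 : (2*n+1).choose (n - i) = (2*n+1).choose (n+1+i) := by
      have h : n+1+i ≤ 2*n+1 := by omega
      rw [← Nat.choose_symm h, show 2*n+1 - (n+1+i) = n - i by omega]
    have e2 : ((n - i : ℕ) : ℝ) = (n:ℝ) - i := by
      rw [Nat.cast_sub hi']
    rw [e0, e1, e2]
    push_cast
    ring
  rw [hsplit, Finset.sum_range_add, Finset.sum_congr rfl habs_lo,
    Finset.sum_congr rfl habs_up, hAB, hB]
  ring

lemma mul_sign_eq_abs (x : ℝ) : x * Real.sign x = |x| := by
  rcases lt_trichotomy x 0 with h | h | h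
  · rw [Real.sign_of_neg h, abs_of_neg h]; ring
  · simp [h]
  · rw [Real.sign_of_pos h, abs_of_pos h]; ring

lemma tanh_lt_one' (x : ℝ) : Real.tanh x < 1 := by
  rw [Real.tanh_eq_sinh_div_cosh]
  exact (div_lt_one (Real.cosh_pos x)).mpr (Real.sinh_lt_cosh x)

lemma sign_sum_zero (n : ℕ) :
    ∑ c ∈ Finset.range (2*n+2), ((2*n+1).choose c : ℝ) * Real.sign (2*(c:ℝ) - (2*n+1)) = 0 := by
  set T := ∑ c ∈ Finset.range (2*n+2), ((2*n+1).choose c : ℝ) * Real.sign (2*(c:ℝ) - (2*n+1))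
    with hT
  have : T = -T := by
    nth_rewrite 1 [hT]
    rw [← Finset.sum_range_reflect]
    rw [show -T = ∑ c ∈ Finset.range (2*n+2),
      -(((2*n+1).choose c : ℝ) * Real.sign (2*(c:ℝ) - (2*n+1))) by rw [← Finset.sum_neg_distrib]]
    refine Finset.sum_congr rfl (fun c hc => ?_)
    have hc' : c ≤ 2*n+1 := Nat.lt_succ_iff.mp (Finset.mem_range.mp hc)
    have e0 : 2*n+2-1-c = 2*n+1-c := by omega
    have e1 : (2*n+1).choose (2*n+1-c) = (2*n+1).choose c := Nat.choose_symm hc'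
    have e2 : ((2*n+1-c : ℕ) : ℝ) = (2*(n:ℝ)+1) - c := by
      rw [Nat.cast_sub hc']; push_cast; ring
    rw [e0, e1, e2, show 2*((2*(n:ℝ)+1) - c) - (2*(n:ℝ)+1) = -(2*(c:ℝ) - (2*(n:ℝ)+1)) by ring,
      Real.sign_neg]
    ring
  linarith

lemma prod_hasDerivAt (n : ℕ) (S : Fin (2*n+1) → Bool) :
    HasDerivAt (fun m : ℝ => ∏ j, (1 + pm (S j) * m) / 2)
      ((∑ j, pm (S j)) / 2^(2*n+1)) 0 := by
  have h : ∀ j ∈ (Finset.univ : Finset (Fin (2*n+1))),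
      HasDerivAt (fun m : ℝ => (1 + pm (S j) * m) / 2) (pm (S j) / 2) (0:ℝ) := by
    intro j _
    simpa using (((hasDerivAt_id (0:ℝ)).const_mul (pm (S j))).const_add 1).div_const 2
  have hp := HasDerivAt.fun_finsetProd h
  refine hp.congr_deriv (Eq.symm ?_)
  rw [Finset.sum_div]
  refine Finset.sum_congr rfl (fun j _ => ?_)
  have hpr : ∀ i ∈ Finset.univ.erase j, (1 + pm (S i) * (0:ℝ)) / 2 = (1/2:ℝ) := by
    intro i _; norm_num
  rw [Finset.prod_congr rfl hpr, Finset.prod_const,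
    Finset.card_erase_of_mem (Finset.mem_univ j), Finset.card_univ, Fintype.card_fin,
    smul_eq_mul]
  have h12 : ((1:ℝ)/2) ^ (2*n+1-1) = 2 / 2^(2*n+1) := by
    rw [show 2*n+1-1 = 2*n by omega, one_div, inv_pow, pow_succ]
    field_simp
  rw [h12]
  ring

end Aux

/-- Proposition 1 (instability part): for odd `k`, if `tanh β > b(k)` then the
majority magnetization map `f_χ` has a nontrivial fixed point `m* ∈ (0,1]`. -/
theorem stmt4 (k : ℕ) (hk : Odd k) (β : ℝ) (hβ : 0 < β)
    (b : ℝ)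
    (hb : b = 2 ^ (k - 1) / ((k : ℝ) * (Nat.choose (k - 1) ((k - 1) / 2) : ℝ)))
    (fχ : ℝ → ℝ)
    (hf : ∀ m, fχ m = Real.tanh β *
      ∑ S : Fin k → Bool, (∏ j, (1 + pm (S j) * m) / 2) * Real.sign (∑ j, pm (S j)))
    (ht : b < Real.tanh β) :
    ∃ m ∈ Set.Ioc (0:ℝ) 1, fχ m = m ∧ m ≠ 0 := by
  obtain ⟨n, hn⟩ := hk
  subst hn
  have e1 : 2*n+1-1 = 2*n := by omega
  have e2 : (2*n)/2 = n := by omega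
  rw [e1, e2] at hb
  have hCpos : (0:ℝ) < ((2*n).choose n : ℝ) := by
    exact_mod_cast Nat.choose_pos (by omega : n ≤ 2*n)
  have hkpos : (0:ℝ) < ((2*n+1 : ℕ):ℝ) := by positivity
  have hbpos : 0 < b := by rw [hb]; positivity
  have htanh1 : Real.tanh β < 1 := tanh_lt_one' β
  -- fχ 0 = 0
  have hsign0 : ∑ S : Fin (2*n+1) → Bool, Real.sign (∑ j, pm (S j)) = 0 := by
    rw [sum_group (2*n+1) Real.sign]
    rw [show 2*n+1+1 = 2*n+2 by omega]
    rw [← sign_sum_zero n]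
    refine Finset.sum_congr rfl (fun c _ => ?_)
    push_cast
    ring_nf
  have hfx0 : fχ 0 = 0 := by
    rw [hf]
    have hterm : ∀ S : Fin (2*n+1) → Bool,
        (∏ j, (1 + pm (S j) * (0:ℝ)) / 2) * Real.sign (∑ j, pm (S j))
        = (1/2:ℝ)^(2*n+1) * Real.sign (∑ j, pm (S j)) := by
      intro S
      rw [Finset.prod_congr rfl (fun j _ => by norm_num : ∀ j ∈ Finset.univ,
        (1 + pm (S j) * (0:ℝ)) / 2 = (1/2:ℝ)), Finset.prod_const, Finset.card_univ,
        Fintype.card_fin]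
    rw [Finset.sum_congr rfl (fun S _ => hterm S), ← Finset.mul_sum, hsign0]
    ring
  -- derivative
  set D : ℝ := Real.tanh β *
      ∑ S : Fin (2*n+1) → Bool, ((∑ j, pm (S j)) / 2^(2*n+1)) * Real.sign (∑ j, pm (S j))
    with hD
  have hderiv : HasDerivAt fχ D 0 := by
    have hG : HasDerivAt (fun m : ℝ =>
        ∑ S : Fin (2*n+1) → Bool, (∏ j, (1 + pm (S j) * m) / 2) * Real.sign (∑ j, pm (S j)))
        (∑ S : Fin (2*n+1) → Bool, ((∑ j, pm (S j)) / 2^(2*n+1)) * Real.sign (∑ j, pm (S j)))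
        0 :=
      HasDerivAt.fun_sum (fun S _ => (prod_hasDerivAt n S).mul_const _)
    have := hG.const_mul (Real.tanh β)
    have hfun : fχ = fun m => Real.tanh β *
        ∑ S : Fin (2*n+1) → Bool, (∏ j, (1 + pm (S j) * m) / 2) * Real.sign (∑ j, pm (S j)) :=
      funext hf
    rw [hfun, hD]
    exact this
  -- D = tanh β / b
  have hDval : D = Real.tanh β / b := by
    rw [hD]
    have : ∑ S : Fin (2*n+1) → Bool, ((∑ j, pm (S j)) / 2^(2*n+1)) * Real.sign (∑ j, pm (S j))
        = (∑ S : Fin (2*n+1) → Bool, (∑ j, pm (S j)) * Real.sign (∑ j, pm (S j))) / 2^(2*n+1) := by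
      rw [Finset.sum_div]
      exact Finset.sum_congr rfl (fun S _ => by ring)
    rw [this]
    have habs : ∑ S : Fin (2*n+1) → Bool, (∑ j, pm (S j)) * Real.sign (∑ j, pm (S j))
        = 2 * (2*(n:ℝ)+1) * ((2*n).choose n : ℝ) := by
      have hg := sum_group (2*n+1) (fun x => x * Real.sign x)
      rw [hg, show 2*n+1+1 = 2*n+2 by omega, ← key n]
      refine Finset.sum_congr rfl (fun c _ => ?_)
      rw [← mul_sign_eq_abs]
      push_cast
      ring_nf
    rw [habs, hb]
    have h2 : (0:ℝ) < 2^(2*n+1) := by positivity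
    have h2' : (2:ℝ)^(2*n+1) = 2 * 2^(2*n) := by rw [pow_succ]; ring
    push_cast
    field_simp
    ring
  have hD1 : 1 < D := by
    rw [hDval]
    exact (one_lt_div hbpos).mpr ht
  -- find small positive point with fχ m > m
  have hslope : Filter.Tendsto (slope fχ 0) (nhdsWithin 0 {(0:ℝ)}ᶜ) (nhds D) :=
    hasDerivAt_iff_tendsto_slope.mp hderiv
  have hmono : nhdsWithin (0:ℝ) (Set.Ioi 0) ≤ nhdsWithin 0 {(0:ℝ)}ᶜ :=
    nhdsWithin_mono 0 (fun x hx => ne_of_gt hx)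
  have hev : ∀ᶠ m in nhdsWithin (0:ℝ) (Set.Ioi 0), 1 < slope fχ 0 m :=
    (hslope.mono_left hmono).eventually (eventually_gt_nhds hD1)
  have hIoo : Set.Ioo (0:ℝ) 1 ∈ nhdsWithin (0:ℝ) (Set.Ioi 0) :=
    Ioo_mem_nhdsGT_of_mem (by constructor <;> norm_num)
  obtain ⟨m0, hm0s, hm0I⟩ := (hev.and (Filter.eventually_of_mem hIoo (fun x hx => hx))).exists
  obtain ⟨hm0pos, hm0lt1⟩ := hm0I
  have hfm0 : m0 < fχ m0 := by
    have : slope fχ 0 m0 = fχ m0 / m0 := by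
      rw [slope_def_field]; rw [hfx0]; simp [div_eq_div_iff]
    rw [this] at hm0s
    calc m0 = 1 * m0 := by ring
    _ < (fχ m0 / m0) * m0 := by exact mul_lt_mul_of_pos_right hm0s hm0pos
    _ = fχ m0 := by field_simp
  -- fχ 1 = tanh β
  have hfx1 : fχ 1 = Real.tanh β := by
    rw [hf]
    have hsum : ∑ S : Fin (2*n+1) → Bool,
        (∏ j, (1 + pm (S j) * (1:ℝ)) / 2) * Real.sign (∑ j, pm (S j)) = 1 := by
      rw [Fintype.sum_eq_single (fun _ => true)]
      · have hp : ∏ j : Fin (2*n+1), (1 + pm true * (1:ℝ)) / 2 = 1 := by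
          simp [pm]
        rw [hp, one_mul]
        have : ∑ j : Fin (2*n+1), pm true = ((2*n+1 : ℕ):ℝ) := by
          simp [pm, Finset.card_univ]
        rw [this, Real.sign_of_pos hkpos]
      · intro S hS
        have : ∃ j, S j ≠ true := by
          by_contra h
          push_neg at h
          exact hS (funext (fun j => h j))
        obtain ⟨j, hj⟩ := this
        have hSj : S j = false := Bool.eq_false_iff.mpr hj
        have : (1 + pm (S j) * (1:ℝ)) / 2 = 0 := by rw [hSj]; simp [pm]
        rw [Finset.prod_eq_zero (Finset.mem_univ j) this, zero_mul]
    rw [hsum, mul_one]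
  -- IVT
  have hcont : Continuous fχ := by
    have hfun : fχ = fun m => Real.tanh β *
        ∑ S : Fin (2*n+1) → Bool, (∏ j, (1 + pm (S j) * m) / 2) * Real.sign (∑ j, pm (S j)) :=
      funext hf
    rw [hfun]
    refine continuous_const.mul (continuous_finset_sum _ (fun S _ => Continuous.mul ?_
      continuous_const))
    exact continuous_finset_prod _ (fun j _ => (continuous_const.add
      (continuous_const.mul continuous_id)).div_const 2)
  set g : ℝ → ℝ := fun m => fχ m - m with hg
  have hgcont : ContinuousOn g (Set.Icc m0 1) := (hcont.sub continuous_id).continuousOn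
  have h0mem : (0:ℝ) ∈ Set.Icc (g 1) (g m0) := by
    constructor
    · rw [hg]; simp only; rw [hfx1]; linarith
    · rw [hg]; simp only; linarith
  obtain ⟨m, hmI, hgm⟩ := intermediate_value_Icc' (le_of_lt hm0lt1) hgcont h0mem
  refine ⟨m, ⟨lt_of_lt_of_le hm0pos hmI.1, hmI.2⟩, ?_, ?_⟩
  · have : fχ m - m = 0 := hgm
    linarith
  · exact ne_of_gt (lt_of_lt_of_le hm0pos hmI.1)
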